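/- For the pure birth process transient distribution p(k,t) = (1/k!) Σ_{j=1}^{k+1} (-1)^{k+1-j} j^k C(k+1,j) e^{-λt/j}, each p(k,t) is nonnegative for all t ≥ 0 and k ≥ 0. -/

import Mathlib

open Finset Real Filter

section Aux

private lemma cd_mono {f : ℝ → ℝ} (hf : ContDiff ℝ (⊤:ℕ∞) f) (n : ℕ) : ContDiff ℝ n f :=
  hf.of_le (by exact_mod_cast le_top)

private lemma cd_deriv {f : ℝ → ℝ} (hf : ContDiff ℝ (⊤:ℕ∞) f) :
    ContDiff ℝ (⊤:ℕ∞) (deriv f) := (contDiff_infty_iff_deriv.mp hf).2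

private lemma itd_add {f g : ℝ → ℝ} (hf : ContDiff ℝ (⊤:ℕ∞) f) (hg : ContDiff ℝ (⊤:ℕ∞) g)
    (n : ℕ) (x : ℝ) :
    iteratedDeriv n (fun y => f y + g y) x = iteratedDeriv n f x + iteratedDeriv n g x := by
  have := iteratedDerivWithin_add (Set.mem_univ x) uniqueDiffOn_univ
      ((cd_mono hf n).contDiffWithinAt) ((cd_mono hg n).contDiffWithinAt)
  simpa [iteratedDerivWithin_univ, Pi.add_def] using this

private lemma itd_smul {f : ℝ → ℝ} (hf : ContDiff ℝ (⊤:ℕ∞) f) (c : ℝ) (n : ℕ) (x : ℝ) :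
    iteratedDeriv n (fun y => c * f y) x = c * iteratedDeriv n f x := by
  have := iteratedDerivWithin_const_smul (Set.mem_univ x) uniqueDiffOn_univ c
      ((cd_mono hf n).contDiffWithinAt)
  simpa [iteratedDerivWithin_univ, smul_eq_mul] using this

private lemma itd_zero_fun (n : ℕ) (x : ℝ) : iteratedDeriv n (fun _ : ℝ => (0:ℝ)) x = 0 := by
  have h : deriv (fun _ : ℝ => (0:ℝ)) = fun _ => (0:ℝ) := by funext y; simp
  rw [iteratedDeriv_eq_iterate, Function.iterate_fixed h]

private lemma cd_expc (c : ℝ) : ContDiff ℝ (⊤:ℕ∞) (fun u : ℝ => Real.exp (-(c * u))) :=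
  Real.contDiff_exp.comp ((contDiff_const.mul contDiff_id).neg)

private lemma itd_exp (c : ℝ) (n : ℕ) (x : ℝ) :
    iteratedDeriv n (fun u => Real.exp (-(c * u))) x = (-c) ^ n * Real.exp (-(c * x)) := by
  induction n generalizing x with
  | zero => simp
  | succ n ih =>
    rw [iteratedDeriv_succ']
    have hd : deriv (fun u => Real.exp (-(c * u))) = fun u => (-c) * Real.exp (-(c * u)) := by
      funext u
      have h1 : HasDerivAt (fun u : ℝ => -(c * u)) (-c) u := by
        have h := (hasDerivAt_id' u).const_mul (-c); simp only [mul_one, neg_mul] at h; exact h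
      rw [h1.exp.deriv]; ring
    rw [hd, itd_smul (cd_expc c) (-c) n x, ih]; ring

private lemma itd_id_mul : ∀ (m : ℕ) (F : ℝ → ℝ), ContDiff ℝ (⊤:ℕ∞) F → ∀ x : ℝ,
    iteratedDeriv (m+1) (fun u => u * F u) x
      = x * iteratedDeriv (m+1) F x + ((m:ℝ)+1) * iteratedDeriv m F x := by
  intro m
  induction m with
  | zero =>
    intro F hF x
    rw [iteratedDeriv_one, iteratedDeriv_one, iteratedDeriv_zero]
    have h1 : HasDerivAt (fun u => u * F u) (1 * F x + x * deriv F x) x :=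
      (hasDerivAt_id x).mul (hF.differentiable (by simp) x).hasDerivAt
    rw [h1.deriv]; ring
  | succ m ih =>
    intro F hF x
    have hF' := cd_deriv hF
    rw [iteratedDeriv_succ' (n := m + 1)]
    have hd : deriv (fun u => u * F u) = fun u => F u + u * deriv F u := by
      funext u
      have h1 : HasDerivAt (fun u => u * F u) (1 * F u + u * deriv F u) u :=
        (hasDerivAt_id u).mul (hF.differentiable (by simp) u).hasDerivAt
      rw [h1.deriv]; ring
    have hc1 : ContDiff ℝ (⊤:ℕ∞) (fun u => u * deriv F u) := contDiff_id.mul hF'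
    rw [hd, itd_add hF hc1 (m+1) x, ih (deriv F) hF' x,
      ← iteratedDeriv_succ', ← iteratedDeriv_succ']
    push_cast; ring

private lemma itd_inv_key : ∀ (n : ℕ) (f : ℝ → ℝ), ContDiff ℝ (⊤:ℕ∞) f → ∀ x : ℝ, 0 < x →
    iteratedDeriv (n+1) (fun y => y ^ n * f y⁻¹) x
      = (-1) ^ (n+1) * (x⁻¹) ^ (n+2) * iteratedDeriv (n+1) f x⁻¹ := by
  intro n
  induction n with
  | zero =>
    intro f hf x hx
    have h0 : (fun y : ℝ => y ^ 0 * f y⁻¹) = fun y => f y⁻¹ := by funext y; simp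
    rw [h0, iteratedDeriv_one, iteratedDeriv_one]
    have h1 : HasDerivAt (fun y : ℝ => f y⁻¹) (deriv f x⁻¹ * (-(x^2)⁻¹)) x :=
      HasDerivAt.comp x (hf.differentiable (by simp) x⁻¹).hasDerivAt
        (hasDerivAt_inv hx.ne')
    rw [h1.deriv]
    have hx0 : x ≠ 0 := hx.ne'
    ring
  | succ n ih =>
    intro f hf x hx
    have hf' := cd_deriv hf
    set g : ℝ → ℝ := fun u => ((n:ℝ)+1) * f u - u * deriv f u with hgdef
    have hg_cd : ContDiff ℝ (⊤:ℕ∞) g := (contDiff_const.mul hf).sub (contDiff_id.mul hf')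
    have heq : Set.EqOn (deriv (fun y => y ^ (n+1) * f y⁻¹))
        (fun y => y ^ n * g y⁻¹) (Set.Ioi 0) := by
      intro y hy
      have hy0 : (y:ℝ) ≠ 0 := (ne_of_gt hy)
      have h1 : HasDerivAt (fun y : ℝ => f y⁻¹) (deriv f y⁻¹ * (-(y^2)⁻¹)) y :=
        HasDerivAt.comp y (hf.differentiable (by simp) y⁻¹).hasDerivAt
          (hasDerivAt_inv hy0)
      have h2 := (hasDerivAt_pow (n+1) y).mul h1
      rw [HasDerivAt.deriv (f := fun y => y ^ (n+1) * f y⁻¹) h2]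
      simp only [hgdef, Nat.add_sub_cancel]
      push_cast
      field_simp
      ring
    rw [iteratedDeriv_succ',
      Set.EqOn.iteratedDeriv_of_isOpen heq isOpen_Ioi (n+1) (Set.mem_Ioi.mpr hx),
      ih g hg_cd x hx]
    have hval : iteratedDeriv (n+1) g x⁻¹ = -(x⁻¹ * iteratedDeriv (n+2) f x⁻¹) := by
      have h3 : iteratedDeriv (n+1) g x⁻¹
          = iteratedDeriv (n+1) (fun u => ((n:ℝ)+1) * f u + (-1) * (u * deriv f u)) x⁻¹ := by
        congr 1; funext u; simp only [hgdef]; ring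
      have hc1 : ContDiff ℝ (⊤:ℕ∞) (fun u => u * deriv f u) := contDiff_id.mul hf'
      have hc2 : ContDiff ℝ (⊤:ℕ∞) (fun u => ((n:ℝ)+1) * f u) := contDiff_const.mul hf
      have hc3 : ContDiff ℝ (⊤:ℕ∞) (fun u => (-1:ℝ) * (u * deriv f u)) := contDiff_const.mul hc1
      rw [h3, itd_add hc2 hc3 (n+1) x⁻¹,
        itd_smul hf ((n:ℝ)+1) (n+1) x⁻¹, itd_smul hc1 (-1) (n+1) x⁻¹,
        itd_id_mul n (deriv f) hf' x⁻¹, ← iteratedDeriv_succ', ← iteratedDeriv_succ']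
      ring
    rw [hval]
    ring

private lemma fd_nonneg : ∀ (n : ℕ) (G : ℝ → ℝ), ContDiff ℝ (⊤:ℕ∞) G →
    (∀ x, 0 ≤ iteratedDeriv n G x) → ∀ a : ℝ, 0 ≤ (fwdDiff (1:ℝ) : (ℝ → ℝ) → (ℝ → ℝ))^[n] G a := by
  intro n
  induction n with
  | zero => intro G _ h a; simpa using h a
  | succ n ih =>
    intro G hG h a
    rw [Function.iterate_succ_apply]
    have hshift : ContDiff ℝ (⊤:ℕ∞) (fun x : ℝ => G (x + 1)) :=
      hG.comp (contDiff_id.add contDiff_const)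
    have hGd : ContDiff ℝ (⊤:ℕ∞) (fwdDiff (1:ℝ) G) := by
      have : fwdDiff (1:ℝ) G = fun x => G (x + 1) - G x := rfl
      rw [this]; exact hshift.sub hG
    refine ih (fwdDiff (1:ℝ) G) hGd ?_ a
    intro x
    have hkey : iteratedDeriv n (fwdDiff (1:ℝ) G) x
        = iteratedDeriv n G (x+1) - iteratedDeriv n G x := by
      have h1 : fwdDiff (1:ℝ) G = fun x => G (x+1) + (-1) * G x := by
        funext y; simp [fwdDiff]; ring
      rw [h1, itd_add hshift (contDiff_const.mul hG) n x, itd_smul hG (-1) n x,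
        iteratedDeriv_comp_add_const n G 1]
      ring
    rw [hkey, sub_nonneg]
    have hmono : Monotone (iteratedDeriv n G) := by
      apply monotone_of_deriv_nonneg
      · exact hG.differentiable_iteratedDeriv n (by exact_mod_cast WithTop.coe_lt_top _)
      · intro y; rw [← iteratedDeriv_succ]; exact h y
    exact hmono (by linarith)

end Aux

/-- Transient distribution of the pure birth process with rates `λ/(1+k)`. -/
noncomputable def birthP (lam : ℝ) (k : ℕ) (t : ℝ) : ℝ :=
  (1 / (Nat.factorial k : ℝ)) *
    ∑ j ∈ Finset.Icc 1 (k + 1),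
      (-1 : ℝ) ^ (k + 1 - j) * (j : ℝ) ^ k * ((k + 1).choose j : ℝ) *
        Real.exp (-(lam * t) / (j : ℝ))

private lemma main_pos (lam : ℝ) (hlam : 0 < lam) (k : ℕ) (t : ℝ) (ht : 0 < t) :
    0 ≤ birthP lam k t := by
  set c := lam * t with hc
  have hcpos : 0 < c := mul_pos hlam ht
  set G : ℝ → ℝ := fun x => x ^ k * expNegInvGlue (x / c) with hG
  have hGcd : ContDiff ℝ (⊤:ℕ∞) G :=
    (contDiff_id.pow k).mul (expNegInvGlue.contDiff.comp (contDiff_id.div_const c))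
  have hIoi : ∀ x ∈ Set.Ioi (0:ℝ), 0 ≤ iteratedDeriv (k+1) G x := by
    intro x hx
    have hxp : (0:ℝ) < x := hx
    have heq : Set.EqOn G (fun y => y ^ k * Real.exp (-(c * y⁻¹))) (Set.Ioi 0) := by
      intro y hy
      have hyp : (0:ℝ) < y := hy
      have h1 : expNegInvGlue (y / c) = Real.exp (-(c * y⁻¹)) := by
        rw [expNegInvGlue, if_neg (not_le.mpr (div_pos hyp hcpos))]
        congr 1
        rw [inv_div]
        field_simp
      simp only [hG, h1]
    rw [Set.EqOn.iteratedDeriv_of_isOpen heq isOpen_Ioi (k+1) hx]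
    have hkey := itd_inv_key k (fun u => Real.exp (-(c * u))) (cd_expc c) x hxp
    rw [hkey, itd_exp c (k+1) x⁻¹]
    have h2 : (-1:ℝ)^(k+1) * (x⁻¹)^(k+2) * ((-c)^(k+1) * Real.exp (-(c * x⁻¹)))
        = c^(k+1) * ((x⁻¹)^(k+2) * Real.exp (-(c * x⁻¹))) := by
      have h3 : (-1:ℝ)^(k+1) * (-c)^(k+1) = c^(k+1) := by
        rw [← mul_pow, neg_one_mul, neg_neg]
      calc (-1:ℝ)^(k+1) * (x⁻¹)^(k+2) * ((-c)^(k+1) * Real.exp (-(c * x⁻¹)))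
          = ((-1:ℝ)^(k+1) * (-c)^(k+1)) * ((x⁻¹)^(k+2) * Real.exp (-(c * x⁻¹))) := by ring
        _ = c^(k+1) * ((x⁻¹)^(k+2) * Real.exp (-(c * x⁻¹))) := by rw [h3]
    rw [h2]
    positivity
  have hnn : ∀ x : ℝ, 0 ≤ iteratedDeriv (k+1) G x := by
    intro x
    rcases lt_trichotomy x 0 with hx | hx | hx
    · have heq0 : Set.EqOn G (fun _ => (0:ℝ)) (Set.Iio 0) := by
        intro y hy
        have : y / c ≤ 0 := div_nonpos_of_nonpos_of_nonneg (le_of_lt hy) hcpos.le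
        simp [hG, expNegInvGlue.zero_of_nonpos this]
      rw [Set.EqOn.iteratedDeriv_of_isOpen heq0 isOpen_Iio (k+1) (Set.mem_Iio.mpr hx)]
      rw [itd_zero_fun]
    · subst hx
      have hcont : Continuous (iteratedDeriv (k+1) G) :=
        hGcd.continuous_iteratedDeriv (k+1) (by exact_mod_cast le_top)
      have htend : Tendsto (iteratedDeriv (k+1) G) (nhdsWithin 0 (Set.Ioi 0))
          (nhds (iteratedDeriv (k+1) G 0)) :=
        hcont.continuousAt.tendsto.mono_left nhdsWithin_le_nhds
      exact ge_of_tendsto htend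
        (Filter.eventually_of_mem self_mem_nhdsWithin (fun y hy => hIoi y hy))
    · exact hIoi x hx
  have hfd := fd_nonneg (k+1) G hGcd hnn 0
  rw [fwdDiff_iter_eq_sum_shift] at hfd
  -- rewrite the sum
  have hins : Finset.range (k+2) = insert 0 (Finset.Icc 1 (k+1)) := by
    ext j; simp; omega
  rw [hins, Finset.sum_insert (by simp)] at hfd
  have hzero : ((-1:ℤ)^(k+1-0) * ((k+1).choose 0 : ℤ)) • G ((0:ℝ) + (0:ℕ) • (1:ℝ)) = 0 := by
    have : G 0 = 0 := by
      simp [hG, expNegInvGlue.zero]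
    simp [this]
  rw [hzero, zero_add] at hfd
  have hsum : ∑ j ∈ Finset.Icc 1 (k+1),
      ((-1:ℤ)^(k+1-j) * ((k+1).choose j : ℤ)) • G ((0:ℝ) + (j:ℕ) • (1:ℝ))
      = ∑ j ∈ Finset.Icc 1 (k+1),
        (-1 : ℝ) ^ (k + 1 - j) * (j : ℝ) ^ k * ((k + 1).choose j : ℝ) *
          Real.exp (-(lam * t) / (j : ℝ)) := by
    apply Finset.sum_congr rfl
    intro j hj
    have hj1 : 1 ≤ j := (Finset.mem_Icc.mp hj).1
    have hjpos : (0:ℝ) < (j:ℝ) := by exact_mod_cast hj1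
    have hGj : G ((0:ℝ) + (j:ℕ) • (1:ℝ)) = (j:ℝ)^k * Real.exp (-(lam * t) / (j:ℝ)) := by
      have hval : ((0:ℝ) + (j:ℕ) • (1:ℝ)) = (j:ℝ) := by simp
      rw [hval]
      have h1 : expNegInvGlue ((j:ℝ) / c) = Real.exp (-(lam*t) / (j:ℝ)) := by
        rw [expNegInvGlue, if_neg (not_le.mpr (div_pos hjpos hcpos))]
        congr 1
        rw [inv_div, hc]
        field_simp
      simp only [hG, h1]
    rw [hGj, zsmul_eq_mul]
    push_cast
    ring
  rw [hsum] at hfd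
  unfold birthP
  apply mul_nonneg _ hfd
  positivity

/-- Each `p(k,t)` is nonnegative for all `t ≥ 0` and `k ≥ 0`. -/
theorem stmt_19 (lam : ℝ) (hlam : 0 < lam) (k : ℕ) (t : ℝ) (ht : 0 ≤ t) :
    0 ≤ birthP lam k t := by
  rcases ht.lt_or_eq with htpos | hteq
  · exact main_pos lam hlam k t htpos
  · subst hteq
    have hcont : Continuous (fun s => birthP lam k s) := by
      unfold birthP
      fun_prop
    have htend : Tendsto (fun s => birthP lam k s) (nhdsWithin 0 (Set.Ioi 0))
        (nhds (birthP lam k 0)) :=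
      hcont.continuousAt.tendsto.mono_left nhdsWithin_le_nhds
    exact ge_of_tendsto htend
      (Filter.eventually_of_mem self_mem_nhdsWithin (fun s hs => main_pos lam hlam k s hs))
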